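/- Let X = ⋃_{k≥1} (A_k ∪ B_{k+1}) ⊆ ℝ², where A_k = [k,∞) × {k} and B_k = {k} × [k−1,k]. Let d_e be the Euclidean metric on X and let d be the path metric on X (the distance between two points is the infimum of Euclidean lengths of continuous paths in X joining them). Then the identity map id : (X,d) → (X,d_e) satisfies d_e(p,q) ≤ d(p,q) for all p,q ∈ X (so it is coarse), and it is coarsely finite-to-1. -/

import Mathlib

open Metric Bornology Function Set

/-- A map between metric spaces is (coarsely) proper if preimages of bounded
sets are bounded. -/
def MetricallyProper {X Y : Type*} [MetricSpace X] [MetricSpace Y] (f : X → Y) : Prop :=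
  ∀ B : Set Y, IsBounded B → IsBounded (f ⁻¹' B)

/-- A coarse map: proper, and uniformly bornologous. -/
def CoarseMap {X Y : Type*} [MetricSpace X] [MetricSpace Y] (f : X → Y) : Prop :=
  MetricallyProper f ∧
    ∀ R > (0:ℝ), ∃ S > (0:ℝ), ∀ x x' : X, dist x x' ≤ R → dist (f x) (f x') ≤ S

/-- Coarsely surjective map. -/
def CoarselySurjective {X Y : Type*} [MetricSpace X] [MetricSpace Y] (f : X → Y) : Prop :=
  ∃ R > (0:ℝ), ∀ y : Y, ∃ x : X, dist y (f x) ≤ R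

/-- `f` is coarsely `n`-to-1. -/
def CoarselyNTo1 {X Y : Type*} [MetricSpace X] [MetricSpace Y] (f : X → Y) (n : ℕ) : Prop :=
  ∀ R > (0:ℝ), ∃ S > (0:ℝ), ∀ A : Set Y, (∀ y ∈ A, ∀ y' ∈ A, dist y y' ≤ R) →
    ∃ V : Fin n → Set X, (∀ i, ∀ x ∈ V i, ∀ x' ∈ V i, dist x x' ≤ S) ∧ f ⁻¹' A ⊆ ⋃ i, V i

/-- `f` is coarsely finite-to-1. -/
def CoarselyFiniteTo1 {X Y : Type*} [MetricSpace X] [MetricSpace Y] (f : X → Y) : Prop :=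
  ∀ R > (0:ℝ), ∃ S > (0:ℝ), ∃ m : ℕ, ∀ A : Set Y, (∀ y ∈ A, ∀ y' ∈ A, dist y y' ≤ R) →
    ∃ V : Fin m → Set X, (∀ i, ∀ x ∈ V i, ∀ x' ∈ V i, dist x x' ≤ S) ∧ f ⁻¹' A ⊆ ⋃ i, V i

/-- Two maps are close. -/
def Close {X Y : Type*} [MetricSpace X] [MetricSpace Y] (f g : X → Y) : Prop :=
  ∃ R > (0:ℝ), ∀ x : X, dist (f x) (g x) ≤ R

/-- `f` is a coarse equivalence. -/
def CoarseEquivalence {X Y : Type*} [MetricSpace X] [MetricSpace Y] (f : X → Y) : Prop :=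
  CoarseMap f ∧ ∃ g : Y → X, CoarseMap g ∧ Close (f ∘ g) id ∧ Close (g ∘ f) id

/-- `X` and `Y` are coarsely equivalent. -/
def CoarselyEquivalent (X Y : Type*) [MetricSpace X] [MetricSpace Y] : Prop :=
  ∃ f : X → Y, CoarseEquivalence f

/-- A family of subsets is uniformly bounded. -/
def UnifBounded {X : Type*} [MetricSpace X] (𝒰 : Set (Set X)) : Prop :=
  ∃ S : ℝ, ∀ U ∈ 𝒰, ∀ x ∈ U, ∀ y ∈ U, dist x y ≤ S

/-- A family of subsets is `R`-disjoint: distinct members lie at distance `> R`. -/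
def RDisjointFam {X : Type*} [MetricSpace X] (𝒰 : Set (Set X)) (R : ℝ) : Prop :=
  ∀ U ∈ 𝒰, ∀ V ∈ 𝒰, U ≠ V → ∀ x ∈ U, ∀ y ∈ V, R < dist x y

/-- `asdim X ≤ n`. -/
def ASDimLE (X : Type*) [MetricSpace X] (n : ℕ) : Prop :=
  ∀ R > (0:ℝ), ∃ 𝒰 : Fin (n + 1) → Set (Set X),
    (∀ i, UnifBounded (𝒰 i)) ∧ (∀ i, RDisjointFam (𝒰 i) R) ∧
      ∀ x : X, ∃ i, ∃ U ∈ 𝒰 i, x ∈ U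

/-- The asymptotic dimension of `X`, valued in `ℕ∞`. -/
noncomputable def asdim (X : Type*) [MetricSpace X] : ℕ∞ :=
  sInf {n : ℕ∞ | ∃ m : ℕ, n = (m : ℕ∞) ∧ ASDimLE X m}

/-- TI-increasing functions `[0,∞) → [0,∞)`. -/
def TIIncreasing (ρ : NNReal → NNReal) : Prop :=
  Monotone ρ ∧ Filter.Tendsto ρ Filter.atTop Filter.atTop

/-- The variable-radius neighborhood `N(A, ρ)` with respect to a basepoint `x₀`. -/
def GrowNbhd {X : Type*} [MetricSpace X] (x₀ : X) (A : Set X) (ρ : NNReal → NNReal) : Set X :=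
  {x' | ∃ x ∈ A, nndist x' x ≤ ρ (nndist x x₀)}

/-- `f` is coarsely open (with respect to basepoints `x₀`, `y₀`). -/
def CoarselyOpen {X Y : Type*} [MetricSpace X] [MetricSpace Y] (f : X → Y)
    (x₀ : X) (y₀ : Y) : Prop :=
  ∀ A : Set X, ¬ IsBounded A → ∀ ρ : NNReal → NNReal, TIIncreasing ρ →
    ∃ ρ' : NNReal → NNReal, TIIncreasing ρ' ∧
      GrowNbhd y₀ (f '' A) ρ' ⊆ f '' GrowNbhd x₀ A ρ

/-- `N(A, R)`, the closed `R`-neighborhood of `A`. -/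
def NbhdR {X : Type*} [MetricSpace X] (A : Set X) (R : ℝ) : Set X :=
  {x | ∃ a ∈ A, dist x a ≤ R}

/-- A finite collection of subsets is gradually disjoint. -/
def GraduallyDisjoint {X : Type*} [MetricSpace X] {k : ℕ} (A : Fin k → Set X) : Prop :=
  ∀ R > (0:ℝ), ∃ B : Set X, IsBounded B ∧
    ∀ i j, i ≠ j → Disjoint (NbhdR (A i) R \ B) (NbhdR (A j) R \ B)

/-- A finite collection of subsets diverges. -/
def Diverges {X : Type*} [MetricSpace X] {k : ℕ} (A : Fin k → Set X) : Prop :=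
  ∀ R > (0:ℝ), IsBounded (⋂ i, NbhdR (A i) R)

/-- A countable collection of subsets is gradually disjoint: every finite
subcollection is. -/
def GraduallyDisjointSeq {X : Type*} [MetricSpace X] (A : ℕ → Set X) : Prop :=
  ∀ s : Finset ℕ, ∀ R > (0:ℝ), ∃ B : Set X, IsBounded B ∧
    ∀ i ∈ s, ∀ j ∈ s, i ≠ j → Disjoint (NbhdR (A i) R \ B) (NbhdR (A j) R \ B)

/-- A countable collection of subsets diverges: some finite subcollection diverges. -/
def DivergesSeq {X : Type*} [MetricSpace X] (A : ℕ → Set X) : Prop :=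
  ∃ s : Finset ℕ, ∀ R > (0:ℝ), IsBounded (⋂ i ∈ s, NbhdR (A i) R)

/-- A complex-valued function on a metric space is slowly oscillating. -/
def SlowlyOscillating {X : Type*} [MetricSpace X] (φ : X → ℂ) : Prop :=
  ∀ R > (0:ℝ), ∀ ε > (0:ℝ), ∃ A : Set X, IsBounded A ∧
    ∀ x : X, ∀ p ∈ closedBall x R \ A, ∀ p' ∈ closedBall x R \ A, dist (φ p) (φ p') ≤ ε
/-- The horizontal ray `A_k = [k,∞) × {k}`, inside `ℂ ≅ ℝ²`. -/
def Aray (k : ℕ) : Set ℂ := {z | z.im = (k:ℝ) ∧ (k:ℝ) ≤ z.re}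

/-- The vertical segment `B_k = {k} × [k-1,k]`, inside `ℂ ≅ ℝ²`. -/
def Bseg (k : ℕ) : Set ℂ := {z | z.re = (k:ℝ) ∧ (k:ℝ) - 1 ≤ z.im ∧ z.im ≤ (k:ℝ)}

/-- The tree `X = ⋃_{k ≥ 1} (A_k ∪ B_{k+1}) ⊆ ℝ²`. -/
def Xtree : Set ℂ := ⋃ k ∈ {k : ℕ | 1 ≤ k}, (Aray k ∪ Bseg (k + 1))

/-- The Euclidean length of a path in `X ⊆ ℝ² = ℂ`, i.e. its total variation. -/
noncomputable def pathLength {p q : Xtree} (γ : Path p q) : ENNReal :=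
  eVariationOn (fun t => ((γ t : Xtree) : ℂ)) Set.univ

/-- The path metric on `X`: the infimum of the Euclidean lengths of continuous
paths in `X` joining two given points (`∞` if there is none). -/
noncomputable def treePathDist (p q : Xtree) : ENNReal :=
  ⨅ γ : Path p q, pathLength γ

/-- The ray `A_k`, as a subset of the tree `X` (with its Euclidean metric). -/
def ArayX (k : ℕ) : Set Xtree := Subtype.val ⁻¹' Aray k

section AuxTree

lemma mem_Xtree_of_Aray {k : ℕ} (hk : 1 ≤ k) {z : ℂ} (hz : z ∈ Aray k) : z ∈ Xtree :=
  Set.mem_biUnion hk (Or.inl hz)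

lemma mem_Xtree_of_Bseg {k : ℕ} (hk : 2 ≤ k) {z : ℂ} (hz : z ∈ Bseg k) : z ∈ Xtree := by
  have h1 : z ∈ Bseg ((k - 1) + 1) := by rwa [Nat.sub_add_cancel (by omega)]
  exact Set.mem_biUnion (show 1 ≤ k - 1 by omega) (Or.inr h1)

lemma Xtree_cases {z : ℂ} (hz : z ∈ Xtree) :
    ∃ k : ℕ, 1 ≤ k ∧ (z ∈ Aray k ∨ z ∈ Bseg (k + 1)) := by
  simp only [Xtree, Set.mem_iUnion, Set.mem_union, Set.mem_setOf_eq] at hz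
  obtain ⟨k, hk, h⟩ := hz
  exact ⟨k, hk, h⟩

lemma one_le_im_of_mem_Xtree {z : ℂ} (hz : z ∈ Xtree) : 1 ≤ z.im := by
  obtain ⟨k, hk, h | h⟩ := Xtree_cases hz
  · rw [h.1]; exact_mod_cast hk
  · have h1 : (1:ℝ) ≤ k := by exact_mod_cast hk
    have h2 := h.2.1; push_cast at h2; linarith

lemma one_le_re_of_mem_Xtree {z : ℂ} (hz : z ∈ Xtree) : 1 ≤ z.re := by
  obtain ⟨k, hk, h | h⟩ := Xtree_cases hz
  · have h1 : (1:ℝ) ≤ k := by exact_mod_cast hk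
    linarith [h.2]
  · have h1 : (1:ℝ) ≤ k := by exact_mod_cast hk
    have h2 := h.1; push_cast at h2; linarith

lemma mem_Aray_seg {k : ℕ} {p q : ℂ} (hp : p ∈ Aray k) (hq : q ∈ Aray k) {t : ℝ}
    (ht : t ∈ Set.Icc (0:ℝ) 1) : (1 - t) • p + t • q ∈ Aray k := by
  obtain ⟨hp1, hp2⟩ := hp
  obtain ⟨hq1, hq2⟩ := hq
  obtain ⟨ht0, ht1⟩ := ht
  constructor
  · show ((1 - t) • p + t • q).im = _
    rw [Complex.add_im, Complex.smul_im, Complex.smul_im, hp1, hq1]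
    simp only [smul_eq_mul]; ring
  · show (k:ℝ) ≤ ((1 - t) • p + t • q).re
    rw [Complex.add_re, Complex.smul_re, Complex.smul_re]
    simp only [smul_eq_mul]; nlinarith

lemma mem_Bseg_seg {k : ℕ} {p q : ℂ} (hp : p ∈ Bseg k) (hq : q ∈ Bseg k) {t : ℝ}
    (ht : t ∈ Set.Icc (0:ℝ) 1) : (1 - t) • p + t • q ∈ Bseg k := by
  obtain ⟨hp1, hp2, hp3⟩ := hp
  obtain ⟨hq1, hq2, hq3⟩ := hq
  obtain ⟨ht0, ht1⟩ := ht
  refine ⟨?_, ?_, ?_⟩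
  · show ((1 - t) • p + t • q).re = _
    rw [Complex.add_re, Complex.smul_re, Complex.smul_re, hp1, hq1]
    simp only [smul_eq_mul]; ring
  · show (k:ℝ) - 1 ≤ ((1 - t) • p + t • q).im
    rw [Complex.add_im, Complex.smul_im, Complex.smul_im]
    simp only [smul_eq_mul]; nlinarith
  · show ((1 - t) • p + t • q).im ≤ (k:ℝ)
    rw [Complex.add_im, Complex.smul_im, Complex.smul_im]
    simp only [smul_eq_mul]; nlinarith

lemma edist_le_treePathDist (p q : Xtree) : edist (p:ℂ) (q:ℂ) ≤ treePathDist p q := by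
  refine le_iInf fun γ => ?_
  have h := eVariationOn.edist_le (fun t => ((γ t : Xtree) : ℂ)) (Set.mem_univ 0) (Set.mem_univ 1)
  simpa [pathLength] using h

lemma treePathDist_le_edist (p q : Xtree)
    (h : ∀ t : ℝ, t ∈ Set.Icc (0:ℝ) 1 → ((1 - t) • (p:ℂ) + t • (q:ℂ)) ∈ Xtree) :
    treePathDist p q ≤ edist (p:ℂ) (q:ℂ) := by
  set f : ℝ → ℂ := fun s => (1 - s) • (p:ℂ) + s • (q:ℂ) with hf
  have hcont : Continuous fun t : unitInterval => (⟨f t, h t t.2⟩ : Xtree) := by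
    apply Continuous.subtype_mk
    fun_prop
  let γ : Path p q :=
    { toFun := fun t => ⟨f t, h t t.2⟩
      continuous_toFun := hcont
      source' := by ext : 1; simp [f]
      target' := by ext : 1; simp [f] }
  have hlip : LipschitzWith (nndist (p:ℂ) (q:ℂ)) f := by
    apply LipschitzWith.of_dist_le_mul
    intro s t
    have hst : f s - f t = (s - t) • ((q:ℂ) - p) := by
      simp only [f, smul_sub, sub_smul]; abel
    rw [dist_eq_norm, hst, norm_smul, Real.norm_eq_abs, coe_nndist, dist_eq_norm, Real.dist_eq,
      norm_sub_rev]
    ring_nf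
    rfl
  have hmono : MonotoneOn (fun t : unitInterval => (t:ℝ)) Set.univ := fun a _ b _ hab => hab
  have hval : eVariationOn (fun t : unitInterval => (t:ℝ)) Set.univ ≤ ENNReal.ofReal 1 := by
    have h2 := hmono.eVariationOn_le (Set.mem_univ (0:unitInterval)) (Set.mem_univ 1)
    have huniv : (Set.univ : Set unitInterval) ∩ Set.Icc 0 1 = Set.univ :=
      Set.eq_univ_iff_forall.mpr fun t => ⟨Set.mem_univ t, t.2.1, t.2.2⟩
    rw [huniv] at h2
    simpa using h2
  have hlon : LipschitzOnWith (nndist (p:ℂ) (q:ℂ)) f Set.univ := hlip.lipschitzOnWith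
  calc treePathDist p q ≤ pathLength γ := iInf_le _ γ
    _ = eVariationOn (f ∘ fun t : unitInterval => (t:ℝ)) Set.univ := rfl
    _ ≤ ↑(nndist (p:ℂ) (q:ℂ)) * eVariationOn (fun t : unitInterval => (t:ℝ)) Set.univ :=
        LipschitzOnWith.comp_eVariationOn_le hlon (Set.mapsTo_univ _ _)
    _ ≤ ↑(nndist (p:ℂ) (q:ℂ)) * ENNReal.ofReal 1 := by gcongr
    _ = edist (p:ℂ) (q:ℂ) := by rw [ENNReal.ofReal_one, mul_one, edist_nndist]

lemma dist_of_im_eq {z w : ℂ} (h : z.im = w.im) : dist z w = |z.re - w.re| := by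
  rw [Complex.dist_eq_re_im, h]
  simp [Real.sqrt_sq_eq_abs]

lemma dist_of_re_eq {z w : ℂ} (h : z.re = w.re) : dist z w = |z.im - w.im| := by
  rw [Complex.dist_eq_re_im, h]
  simp [Real.sqrt_sq_eq_abs]

variable {T : Type*} [MetricSpace T] (e : T ≃ Xtree)
  (hd : ∀ p q : T, ENNReal.ofReal (dist p q) = treePathDist (e p) (e q))

include hd

lemma dist_le_of_tpd {p q : T} {c : ℝ} (hc : 0 ≤ c)
    (h : treePathDist (e p) (e q) ≤ ENNReal.ofReal c) : dist p q ≤ c := by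
  rw [← hd p q] at h
  exact (ENNReal.ofReal_le_ofReal_iff hc).mp h

lemma dist_le_dist_of_seg {p q : T}
    (h : ∀ t : ℝ, t ∈ Set.Icc (0:ℝ) 1 →
      ((1 - t) • ((e p : Xtree) : ℂ) + t • ((e q : Xtree) : ℂ)) ∈ Xtree) :
    dist p q ≤ dist ((e p : Xtree) : ℂ) ((e q : Xtree) : ℂ) := by
  refine dist_le_of_tpd e hd dist_nonneg ?_
  refine (treePathDist_le_edist _ _ h).trans (le_of_eq ?_)
  exact edist_dist _ _

lemma dist_le_of_mem_Aray {p q : T} {k : ℕ}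
    (hp : ((e p : Xtree) : ℂ) ∈ Aray k) (hq : ((e q : Xtree) : ℂ) ∈ Aray k) :
    dist p q ≤ dist ((e p : Xtree) : ℂ) ((e q : Xtree) : ℂ) := by
  have hk : 1 ≤ k := by
    have h1 := one_le_im_of_mem_Xtree (e p).2
    rw [hp.1] at h1
    exact_mod_cast h1
  exact dist_le_dist_of_seg e hd fun t ht => mem_Xtree_of_Aray hk (mem_Aray_seg hp hq ht)

lemma dist_le_of_mem_Bseg {p q : T} {k : ℕ}
    (hp : ((e p : Xtree) : ℂ) ∈ Bseg k) (hq : ((e q : Xtree) : ℂ) ∈ Bseg k) :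
    dist p q ≤ dist ((e p : Xtree) : ℂ) ((e q : Xtree) : ℂ) := by
  by_cases hk : 2 ≤ k
  · exact dist_le_dist_of_seg e hd fun t ht => mem_Xtree_of_Bseg hk (mem_Bseg_seg hp hq ht)
  · have key : ∀ r : T, ((e r : Xtree) : ℂ) ∈ Bseg k → ((e r : Xtree) : ℂ) = ⟨1, 1⟩ := by
      intro r hr
      have h1 : 1 ≤ ((e r : Xtree) : ℂ).im := one_le_im_of_mem_Xtree (e r).2
      have h2 := hr.2.2
      have h3 : (k:ℝ) ≤ 1 := by exact_mod_cast (by omega : k ≤ 1)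
      have h4 : ((e r : Xtree) : ℂ).im = 1 := le_antisymm (h2.trans h3) h1
      have h5 : (1:ℝ) ≤ k := by
        have := h1.trans h2; exact this
      have h6 : (k:ℝ) = 1 := le_antisymm h3 h5
      have h7 : ((e r : Xtree) : ℂ).re = 1 := by rw [hr.1, h6]
      exact Complex.ext h7 h4
    have heq : e p = e q := Subtype.ext (by rw [key p hp, key q hq])
    have : p = q := e.injective heq
    rw [this]
    simp

def nodePt (k : ℕ) (hk : 1 ≤ k) : Xtree :=
  ⟨⟨(k:ℝ), (k:ℝ)⟩, mem_Xtree_of_Aray hk ⟨rfl, le_refl _⟩⟩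

lemma dist_node_succ (k : ℕ) (hk : 1 ≤ k) :
    dist (e.symm (nodePt k hk)) (e.symm (nodePt (k+1) (by omega))) ≤ 2 := by
  have hmX : (⟨(k:ℝ)+1, (k:ℝ)⟩ : ℂ) ∈ Xtree :=
    mem_Xtree_of_Aray hk ⟨rfl, by simp⟩
  set m : Xtree := ⟨⟨(k:ℝ)+1, (k:ℝ)⟩, hmX⟩ with hmdef
  have hm1 : ((e (e.symm (nodePt k hk)) : Xtree) : ℂ) ∈ Aray k := by
    rw [Equiv.apply_symm_apply]; exact ⟨rfl, le_refl _⟩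
  have hm2 : ((e (e.symm m) : Xtree) : ℂ) ∈ Aray k := by
    rw [Equiv.apply_symm_apply]; exact ⟨rfl, by show (k:ℝ) ≤ (k:ℝ)+1; linarith⟩
  have hm3 : ((e (e.symm m) : Xtree) : ℂ) ∈ Bseg (k+1) := by
    rw [Equiv.apply_symm_apply]
    refine ⟨?_, ?_, ?_⟩
    · show (k:ℝ)+1 = ((k+1:ℕ):ℝ); push_cast; ring
    · show ((k+1:ℕ):ℝ) - 1 ≤ (k:ℝ); push_cast; linarith
    · show (k:ℝ) ≤ ((k+1:ℕ):ℝ); push_cast; linarith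
  have hm4 : ((e (e.symm (nodePt (k+1) (by omega))) : Xtree) : ℂ) ∈ Bseg (k+1) := by
    rw [Equiv.apply_symm_apply]
    exact ⟨rfl, by show ((k+1:ℕ):ℝ) - 1 ≤ ((k+1:ℕ):ℝ); linarith, le_refl _⟩
  have h1 : dist (e.symm (nodePt k hk)) (e.symm m) ≤ 1 := by
    refine (dist_le_of_mem_Aray e hd hm1 hm2).trans ?_
    rw [Equiv.apply_symm_apply, Equiv.apply_symm_apply]
    have hd1 : dist ((nodePt k hk : Xtree) : ℂ) ((m : Xtree) : ℂ) = |(k:ℝ) - ((k:ℝ)+1)| :=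
      dist_of_im_eq rfl
    rw [hd1]
    have : (k:ℝ) - ((k:ℝ)+1) = -1 := by ring
    rw [this, abs_neg, abs_one]
  have h2 : dist (e.symm m) (e.symm (nodePt (k+1) (by omega))) ≤ 1 := by
    refine (dist_le_of_mem_Bseg e hd hm3 hm4).trans ?_
    rw [Equiv.apply_symm_apply, Equiv.apply_symm_apply]
    have hre : ((m : Xtree) : ℂ).re = ((nodePt (k+1) (by omega) : Xtree) : ℂ).re := by
      show (k:ℝ)+1 = ((k+1:ℕ):ℝ); push_cast; ring
    rw [dist_of_re_eq hre]
    show |(k:ℝ) - ((k+1:ℕ):ℝ)| ≤ 1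
    push_cast
    have : (k:ℝ) - ((k:ℝ)+1) = -1 := by ring
    rw [this, abs_neg, abs_one]
  calc dist (e.symm (nodePt k hk)) (e.symm (nodePt (k+1) (by omega)))
      ≤ dist (e.symm (nodePt k hk)) (e.symm m)
        + dist (e.symm m) (e.symm (nodePt (k+1) (by omega))) := dist_triangle _ _ _
    _ ≤ 1 + 1 := add_le_add h1 h2
    _ = 2 := by norm_num

lemma dist_node_one (k : ℕ) (hk : 1 ≤ k) :
    dist (e.symm (nodePt 1 (le_refl 1))) (e.symm (nodePt k hk)) ≤ 2 * (k:ℝ) - 2 := by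
  induction k, hk using Nat.le_induction with
  | base => simp
  | succ n hn ih =>
    calc dist (e.symm (nodePt 1 (le_refl 1))) (e.symm (nodePt (n+1) (by omega)))
        ≤ dist (e.symm (nodePt 1 (le_refl 1))) (e.symm (nodePt n hn))
          + dist (e.symm (nodePt n hn)) (e.symm (nodePt (n+1) (by omega))) := dist_triangle _ _ _
      _ ≤ (2 * (n:ℝ) - 2) + 2 := add_le_add ih (dist_node_succ e hd n hn)
      _ = 2 * ((n+1:ℕ):ℝ) - 2 := by push_cast; ring

lemma dist_to_base (p : T) :
    dist p (e.symm (nodePt 1 (le_refl 1))) ≤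
      2 * ((e p : Xtree) : ℂ).re + ((e p : Xtree) : ℂ).im := by
  obtain ⟨k, hk, hz⟩ := Xtree_cases (e p).2
  have him : 1 ≤ ((e p : Xtree) : ℂ).im := one_le_im_of_mem_Xtree (e p).2
  have hre : 1 ≤ ((e p : Xtree) : ℂ).re := one_le_re_of_mem_Xtree (e p).2
  cases hz with
  | inl hA =>
    have hm1 : ((e (e.symm (nodePt k hk)) : Xtree) : ℂ) ∈ Aray k := by
      rw [Equiv.apply_symm_apply]; exact ⟨rfl, le_refl _⟩
    have h1 : dist p (e.symm (nodePt k hk)) ≤ ((e p : Xtree) : ℂ).re - (k:ℝ) := by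
      refine (dist_le_of_mem_Aray e hd hA hm1).trans ?_
      rw [Equiv.apply_symm_apply]
      have hie : ((e p : Xtree) : ℂ).im = ((nodePt k hk : Xtree) : ℂ).im := hA.1
      rw [dist_of_im_eq hie]
      have : ((nodePt k hk : Xtree) : ℂ).re = (k:ℝ) := rfl
      rw [this, abs_of_nonneg (by linarith [hA.2])]
    have h2 := dist_node_one e hd k hk
    have hkim : (k:ℝ) = ((e p : Xtree) : ℂ).im := hA.1.symm
    calc dist p (e.symm (nodePt 1 (le_refl 1)))
        ≤ dist p (e.symm (nodePt k hk))
          + dist (e.symm (nodePt k hk)) (e.symm (nodePt 1 (le_refl 1))) := dist_triangle _ _ _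
      _ ≤ (((e p : Xtree) : ℂ).re - (k:ℝ)) + (2 * (k:ℝ) - 2) := by
          rw [dist_comm (e.symm (nodePt k hk))]; exact add_le_add h1 h2
      _ ≤ 2 * ((e p : Xtree) : ℂ).re + ((e p : Xtree) : ℂ).im := by rw [← hkim]; nlinarith [hA.2]
  | inr hB =>
    have hm4 : ((e (e.symm (nodePt (k+1) (by omega))) : Xtree) : ℂ) ∈ Bseg (k+1) := by
      rw [Equiv.apply_symm_apply]
      exact ⟨rfl, by show ((k+1:ℕ):ℝ) - 1 ≤ ((k+1:ℕ):ℝ); linarith, le_refl _⟩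
    have h1 : dist p (e.symm (nodePt (k+1) (by omega))) ≤ 1 := by
      refine (dist_le_of_mem_Bseg e hd hB hm4).trans ?_
      rw [Equiv.apply_symm_apply]
      have hre2 : ((e p : Xtree) : ℂ).re = ((nodePt (k+1) (by omega) : Xtree) : ℂ).re := hB.1
      rw [dist_of_re_eq hre2]
      have him2 : ((nodePt (k+1) (by omega) : Xtree) : ℂ).im = ((k+1:ℕ):ℝ) := rfl
      rw [him2, abs_of_nonpos (by linarith [hB.2.2])]
      have := hB.2.1
      push_cast at this ⊢
      linarith
    have h2 := dist_node_one e hd (k+1) (by omega)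
    have hkre : ((k+1:ℕ):ℝ) = ((e p : Xtree) : ℂ).re := hB.1.symm
    push_cast at hkre
    calc dist p (e.symm (nodePt 1 (le_refl 1)))
        ≤ dist p (e.symm (nodePt (k+1) (by omega)))
          + dist (e.symm (nodePt (k+1) (by omega))) (e.symm (nodePt 1 (le_refl 1))) :=
            dist_triangle _ _ _
      _ ≤ 1 + (2 * ((k+1:ℕ):ℝ) - 2) := by
          rw [dist_comm (e.symm (nodePt (k+1) (by omega)))]; exact add_le_add h1 h2
      _ ≤ 2 * ((e p : Xtree) : ℂ).re + ((e p : Xtree) : ℂ).im := by push_cast; linarith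

end AuxTree

/-- Let `(T, d)` be `X` equipped with its path metric (via the
identification `e : T ≃ X`) and let `X` carry the Euclidean metric `d_e`. Then
the identity map `(X,d) → (X,d_e)` satisfies `d_e(p,q) ≤ d(p,q)` (so it is
coarse) and it is coarsely finite-to-1. -/
theorem tree_id_coarse_and_coarselyFiniteTo1 (T : Type*) [MetricSpace T]
    (e : T ≃ Xtree)
    (hd : ∀ p q : T, ENNReal.ofReal (dist p q) = treePathDist (e p) (e q)) :
    (∀ p q : T, dist (e p) (e q) ≤ dist p q) ∧
      CoarseMap (fun p : T => e p) ∧ CoarselyFiniteTo1 (fun p : T => e p) := by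
  have part1 : ∀ p q : T, dist (e p) (e q) ≤ dist p q := by
    intro p q
    have h := edist_le_treePathDist (e p) (e q)
    rw [← hd p q, edist_dist] at h
    rw [Subtype.dist_eq]
    exact (ENNReal.ofReal_le_ofReal_iff dist_nonneg).mp h
  refine ⟨part1, ⟨?_, ?_⟩, ?_⟩
  · -- MetricallyProper
    intro B hB
    rcases Set.eq_empty_or_nonempty B with hBe | ⟨z₁, hz₁⟩
    · simp [hBe]
    rw [Metric.isBounded_iff] at hB
    obtain ⟨C, hC⟩ := hB
    have hC0 : (0:ℝ) ≤ C := le_trans dist_nonneg (hC hz₁ hz₁)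
    refine (Metric.isBounded_closedBall
      (x := e.symm (nodePt 1 (le_refl 1)))
      (r := 2 * ((z₁ : ℂ).re + C) + ((z₁ : ℂ).im + C))).subset ?_
    intro p hp
    simp only [Set.mem_preimage] at hp
    have h := hC hp hz₁
    rw [Subtype.dist_eq] at h
    have hre1 : |(((e p : Xtree):ℂ) - (z₁:ℂ)).re| ≤ dist ((e p : Xtree):ℂ) (z₁:ℂ) := by
      rw [Complex.dist_eq]; exact Complex.abs_re_le_norm _
    have him1 : |(((e p : Xtree):ℂ) - (z₁:ℂ)).im| ≤ dist ((e p : Xtree):ℂ) (z₁:ℂ) := by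
      rw [Complex.dist_eq]; exact Complex.abs_im_le_norm _
    rw [Complex.sub_re] at hre1
    rw [Complex.sub_im] at him1
    have hre2 : ((e p : Xtree):ℂ).re ≤ (z₁:ℂ).re + C := by
      have := (le_abs_self (((e p : Xtree):ℂ).re - (z₁:ℂ).re)).trans (hre1.trans h)
      linarith
    have him2 : ((e p : Xtree):ℂ).im ≤ (z₁:ℂ).im + C := by
      have := (le_abs_self (((e p : Xtree):ℂ).im - (z₁:ℂ).im)).trans (him1.trans h)
      linarith
    rw [Metric.mem_closedBall]
    have h3 := dist_to_base e hd p
    linarith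
  · -- bornologous
    intro R hR
    exact ⟨R, hR, fun x x' h => le_trans (part1 x x') h⟩
  · -- coarsely finite-to-1
    intro R hR
    refine ⟨R, hR, 2 * (2 * ⌈R⌉₊ + 5), fun A hA => ?_⟩
    rcases Set.eq_empty_or_nonempty A with hAe | ⟨y₁, hy₁⟩
    · exact ⟨fun _ => ∅, by simp, by rw [hAe]; simp⟩
    set p₀ : T := e.symm y₁ with hp₀def
    have hp₀ : e p₀ ∈ A := by rw [hp₀def, Equiv.apply_symm_apply]; exact hy₁
    set y₀ : ℂ := ((y₁ : Xtree) : ℂ) with hy₀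
    have hy₀im : 1 ≤ y₀.im := one_le_im_of_mem_Xtree y₁.2
    set N : ℕ := 2 * ⌈R⌉₊ + 5 with hN
    set M : ℕ := ⌈y₀.im + R⌉₊ + 3 with hM
    set n₀ : ℕ := M - N with hn₀
    refine ⟨fun i =>
      {p | e p ∈ A ∧ (if i.val % 2 = 0 then ((e p : Xtree):ℂ) ∈ Aray (n₀ + i.val / 2)
            else ((e p : Xtree):ℂ) ∈ Bseg (n₀ + i.val / 2))}, ?_, ?_⟩
    · intro i x hx x' hx'
      simp only [Set.mem_setOf_eq] at hx hx'
      obtain ⟨hxA, hxC⟩ := hx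
      obtain ⟨hxA', hxC'⟩ := hx'
      have hEd : dist ((e x : Xtree):ℂ) ((e x' : Xtree):ℂ) ≤ R := by
        have := hA _ hxA _ hxA'
        rwa [Subtype.dist_eq] at this
      by_cases hi : i.val % 2 = 0
      · rw [if_pos hi] at hxC hxC'
        exact (dist_le_of_mem_Aray e hd hxC hxC').trans hEd
      · rw [if_neg hi] at hxC hxC'
        exact (dist_le_of_mem_Bseg e hd hxC hxC').trans hEd
    · intro p hp
      simp only [Set.mem_preimage] at hp
      obtain ⟨k, hk, hz⟩ := Xtree_cases (e p).2
      have hdist : dist ((e p : Xtree):ℂ) y₀ ≤ R := by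
        have := hA _ hp _ hp₀
        rw [Subtype.dist_eq] at this
        rwa [hp₀def, Equiv.apply_symm_apply] at this
      have himb : |((e p : Xtree):ℂ).im - y₀.im| ≤ R := by
        have hh : |((((e p : Xtree):ℂ) - y₀)).im| ≤ dist ((e p : Xtree):ℂ) y₀ := by
          rw [Complex.dist_eq]; exact Complex.abs_im_le_norm _
        rw [Complex.sub_im] at hh
        exact hh.trans hdist
      obtain ⟨himb1, himb2⟩ := abs_le.mp himb
      have hceil : (⌈y₀.im + R⌉₊ : ℝ) < y₀.im + R + 1 := Nat.ceil_lt_add_one (by linarith)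
      have hceil2 : y₀.im + R ≤ (⌈y₀.im + R⌉₊ : ℝ) := Nat.le_ceil _
      have hRceil : R ≤ (⌈R⌉₊ : ℝ) := Nat.le_ceil R
      rw [Set.mem_iUnion]
      rcases hz with hzA | hzB
      · have hkim : ((e p : Xtree):ℂ).im = (k:ℝ) := hzA.1
        have hk2 : k ≤ ⌈y₀.im + R⌉₊ := by
          have : (k:ℝ) ≤ (⌈y₀.im + R⌉₊:ℝ) := by linarith
          exact_mod_cast this
        have hk4 : ⌈y₀.im + R⌉₊ < k + 2 * ⌈R⌉₊ + 2 := by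
          have : (⌈y₀.im + R⌉₊:ℝ) < (k:ℝ) + 2 * (⌈R⌉₊:ℝ) + 2 := by linarith
          exact_mod_cast this
      -- nat index facts
        have hfacts : n₀ ≤ k ∧ k < n₀ + N := by omega
        refine ⟨⟨2 * (k - n₀), by omega⟩, ?_⟩
        simp only [Set.mem_setOf_eq]
        refine ⟨hp, ?_⟩
        rw [if_pos (by omega : (2 * (k - n₀)) % 2 = 0)]
        have hidx : n₀ + 2 * (k - n₀) / 2 = k := by omega
        rw [hidx]
        exact hzA
      · have him1' : ((k:ℝ) + 1) - 1 ≤ ((e p : Xtree):ℂ).im := by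
          have := hzB.2.1; push_cast at this; linarith
        have him2' : ((e p : Xtree):ℂ).im ≤ (k:ℝ) + 1 := by
          have := hzB.2.2; push_cast at this; linarith
        have hj2 : k + 1 ≤ ⌈y₀.im + R⌉₊ + 1 := by
          have : ((k:ℝ) + 1) ≤ (⌈y₀.im + R⌉₊:ℝ) + 1 := by linarith
          exact_mod_cast this
        have hj4 : ⌈y₀.im + R⌉₊ < (k + 1) + 2 * ⌈R⌉₊ + 1 := by
          have : (⌈y₀.im + R⌉₊:ℝ) < ((k:ℝ) + 1) + 2 * (⌈R⌉₊:ℝ) + 1 := by linarith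
          exact_mod_cast this
        have hfacts : n₀ ≤ k + 1 ∧ k + 1 < n₀ + N := by omega
        refine ⟨⟨2 * (k + 1 - n₀) + 1, by omega⟩, ?_⟩
        simp only [Set.mem_setOf_eq]
        refine ⟨hp, ?_⟩
        rw [if_neg (by omega : ¬ (2 * (k + 1 - n₀) + 1) % 2 = 0)]
        have hidx : n₀ + (2 * (k + 1 - n₀) + 1) / 2 = k + 1 := by omega
        rw [hidx]
        exact hzB
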